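/- (Exactness of the weighted online DMD inverse-Gram update.) Let 0 < ρ ≤ 1, let x₁,…,x_{k+1} be vectors in ℝⁿ, and suppose G_k = Σ_{i=1}^k ρ^{k−i} xᵢ xᵢᵀ is positive definite. Set P̂_k = ρ⁻¹ G_k⁻¹ and γ_{k+1} = 1/(1 + x_{k+1}ᵀ P̂_k x_{k+1}). Then G_{k+1} = Σ_{i=1}^{k+1} ρ^{k+1−i} xᵢ xᵢᵀ is invertible and ρ⁻¹ (P̂_k − γ_{k+1} P̂_k x_{k+1} x_{k+1}ᵀ P̂_k) = ρ⁻¹ G_{k+1}⁻¹. -/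

import Mathlib

open Matrix

section Aux

variable {n : ℕ}

lemma aux_mul_vecMulVec (A : Matrix (Fin n) (Fin n) ℝ) (a b : Fin n → ℝ) :
    A * vecMulVec a b = vecMulVec (A.mulVec a) b := by
  ext i j
  simp only [vecMulVec_apply, Matrix.mul_apply, mulVec, dotProduct, Finset.sum_mul]
  exact Finset.sum_congr rfl fun m _ => by ring

lemma aux_vecMulVec_mul (A : Matrix (Fin n) (Fin n) ℝ) (a b : Fin n → ℝ) :
    vecMulVec a b * A = vecMulVec a (A.vecMul b) := by
  ext i j
  simp [vecMulVec_apply, Matrix.mul_apply, vecMul, dotProduct, Finset.mul_sum, mul_assoc]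

lemma aux_vecMulVec_mul_vecMulVec (a b c d : Fin n → ℝ) :
    vecMulVec a b * vecMulVec c d = (b ⬝ᵥ c) • vecMulVec a d := by
  ext i j
  simp [vecMulVec_apply, Matrix.mul_apply, dotProduct, Finset.sum_mul, Finset.mul_sum]
  congr 1
  ext m
  ring

lemma aux_posSemidef_vecMulVec (v : Fin n → ℝ) : (vecMulVec v v).PosSemidef := by
  rw [posSemidef_iff_dotProduct_mulVec]
  constructor
  · ext i j
    simp [vecMulVec_apply, conjTranspose_apply, mul_comm]
  · intro y
    have : star y ⬝ᵥ (vecMulVec v v) *ᵥ y = (v ⬝ᵥ y) * (v ⬝ᵥ y) := by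
      simp [vecMulVec_apply, dotProduct, mulVec, Finset.mul_sum, Finset.sum_mul]
      rw [Finset.sum_comm]
      congr 1; ext i; congr 1; ext j; ring
    rw [this]
    exact mul_self_nonneg _

lemma aux_posDef_smul {M : Matrix (Fin n) (Fin n) ℝ} (hM : M.PosDef) {c : ℝ} (hc : 0 < c) :
    (c • M).PosDef := by
  rw [posDef_iff_dotProduct_mulVec]
  constructor
  · show (c • M)ᴴ = c • M
    rw [conjTranspose_smul, hM.isHermitian.eq]
    simp
  · intro y hy
    have := hM.dotProduct_mulVec_pos hy
    simp only [smul_mulVec, dotProduct_smul, smul_eq_mul]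
    positivity

end Aux

/-- Exactness of the weighted online DMD inverse-Gram update: with
`G_k = Σ_{i=1}^k ρ^(k−i) xᵢ xᵢᵀ` positive definite, `P̂_k = ρ⁻¹ G_k⁻¹`, and
`γ = 1/(1 + x_{k+1}ᵀ P̂_k x_{k+1})`, the matrix `G_{k+1}` is invertible and
`ρ⁻¹ (P̂_k − γ P̂_k x_{k+1} x_{k+1}ᵀ P̂_k) = ρ⁻¹ G_{k+1}⁻¹`. -/
theorem weighted_online_dmd_gram_update_exact (n k : ℕ) (ρ : ℝ)
    (hρ0 : 0 < ρ) (hρ1 : ρ ≤ 1) (x : Fin (k + 1) → (Fin n → ℝ))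
    (hG : (∑ i : Fin k, ρ ^ (k - 1 - (i : ℕ)) •
        vecMulVec (x i.castSucc) (x i.castSucc)).PosDef) :
    IsUnit (∑ i : Fin (k + 1), ρ ^ (k - (i : ℕ)) • vecMulVec (x i) (x i)) ∧
    ρ⁻¹ • ((ρ⁻¹ • (∑ i : Fin k, ρ ^ (k - 1 - (i : ℕ)) •
          vecMulVec (x i.castSucc) (x i.castSucc))⁻¹) -
        (1 / (1 + x (Fin.last k) ⬝ᵥ
            (ρ⁻¹ • (∑ i : Fin k, ρ ^ (k - 1 - (i : ℕ)) •
              vecMulVec (x i.castSucc) (x i.castSucc))⁻¹).mulVec (x (Fin.last k)))) •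
          ((ρ⁻¹ • (∑ i : Fin k, ρ ^ (k - 1 - (i : ℕ)) •
              vecMulVec (x i.castSucc) (x i.castSucc))⁻¹) *
            vecMulVec (x (Fin.last k)) (x (Fin.last k)) *
            (ρ⁻¹ • (∑ i : Fin k, ρ ^ (k - 1 - (i : ℕ)) •
              vecMulVec (x i.castSucc) (x i.castSucc))⁻¹))) =
      ρ⁻¹ • (∑ i : Fin (k + 1), ρ ^ (k - (i : ℕ)) • vecMulVec (x i) (x i))⁻¹ := by
  set G : Matrix (Fin n) (Fin n) ℝ :=
    ∑ i : Fin k, ρ ^ (k - 1 - (i : ℕ)) • vecMulVec (x i.castSucc) (x i.castSucc) with hGdef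
  set v : Fin n → ℝ := x (Fin.last k) with hv
  set P : Matrix (Fin n) (Fin n) ℝ := ρ⁻¹ • G⁻¹ with hP
  -- Rewrite the big sum.
  have hsum : (∑ i : Fin (k + 1), ρ ^ (k - (i : ℕ)) • vecMulVec (x i) (x i)) =
      ρ • G + vecMulVec v v := by
    rw [Fin.sum_univ_castSucc]
    simp only [Fin.coe_castSucc, Fin.val_last, Nat.sub_self, pow_zero, one_smul]
    congr 1
    rw [hGdef, Finset.smul_sum]
    refine Finset.sum_congr rfl fun i _ => ?_
    have hi : k - (i : ℕ) = (k - 1 - (i : ℕ)) + 1 := by omega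
    rw [hi, pow_succ, smul_smul, mul_comm]
  set H : Matrix (Fin n) (Fin n) ℝ := ρ • G + vecMulVec v v with hH
  have hGdet : IsUnit G.det := (Matrix.isUnit_iff_isUnit_det G).mp hG.isUnit
  have hPG : P * (ρ • G) = 1 := by
    rw [hP, Matrix.smul_mul, Matrix.mul_smul, smul_smul, inv_mul_cancel₀ hρ0.ne',
      Matrix.nonsing_inv_mul G hGdet, one_smul]
  -- positivity of the denominator
  have hPsd : P.PosSemidef := ((aux_posDef_smul hG.inv (inv_pos.mpr hρ0)).posSemidef)
  have hd : 0 ≤ v ⬝ᵥ P.mulVec v := by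
    simpa using hPsd.dotProduct_mulVec_nonneg v
  set d : ℝ := v ⬝ᵥ P.mulVec v with hdd
  have hc : (1 : ℝ) + d ≠ 0 := by positivity
  set γ : ℝ := 1 / (1 + d) with hγ
  set M : Matrix (Fin n) (Fin n) ℝ := P - γ • (P * vecMulVec v v * P) with hM
  clear_value G v P d γ M H
  have key : M * H = 1 := by
    have h1 : P * vecMulVec v v * P * (ρ • G) = P * vecMulVec v v := by
      rw [Matrix.mul_assoc (P * vecMulVec v v), hPG, Matrix.mul_one]
    have h2 : P * vecMulVec v v * P * vecMulVec v v = d • (P * vecMulVec v v) := by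
      rw [aux_mul_vecMulVec P v v, aux_vecMulVec_mul, aux_vecMulVec_mul_vecMulVec, hdd,
        dotProduct_mulVec]
    have hPH : P * H = 1 + P * vecMulVec v v := by
      rw [hH, Matrix.mul_add, hPG]
    have hQH : P * vecMulVec v v * P * H = (1 + d) • (P * vecMulVec v v) := by
      rw [hH, Matrix.mul_add, h1, h2, add_smul, one_smul]
    rw [hM, Matrix.sub_mul, Matrix.smul_mul, hPH, hQH, smul_smul, hγ, one_div,
      inv_mul_cancel₀ hc, one_smul]
    abel
  have hHdet : IsUnit H.det := Matrix.isUnit_det_of_left_inverse key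
  have hHinv : H⁻¹ = M := Matrix.inv_eq_left_inv key
  constructor
  · rw [hsum]
    exact (Matrix.isUnit_iff_isUnit_det H).mpr hHdet
  · rw [hsum, hHinv, hM]
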